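/- arXiv:2604.22252 — 2 statements merged into one kernel-verified Lean document; each statement's English description precedes it below -/
import Mathlib

section
/- Let G be a graph on n vertices with Seidel eigenvalues σ_1,...,σ_n satisfying |σ_i| > (m-1)/m for all i, where m ≥ 2. Then SE(D_m(G)) = SE(D_m^*(G)) if and only if G has equally many positive and negative Seidel eigenvalues. -/
open Matrix Kronecker BigOperators Finset Polynomial

/-- The all-ones matrix. -/
noncomputable def allOnes (k : Type*) [Fintype k] : Matrix k k ℝ :=
  Matrix.of fun _ _ => 1

/-- The Seidel matrix formed from an adjacency matrix `M`: `S(M) = J - I - 2M`. -/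
noncomputable def seidelOf {k : Type*} [Fintype k] [DecidableEq k]
    (M : Matrix k k ℝ) : Matrix k k ℝ :=
  allOnes k - 1 - 2 • M

/-- The (complex) multiset of eigenvalues of a real matrix: roots of its
characteristic polynomial over `ℂ`. -/
noncomputable def specC {k : Type*} [Fintype k] [DecidableEq k]
    (M : Matrix k k ℝ) : Multiset ℂ :=
  ((M.map (Complex.ofReal)).charpoly).roots

/-- The energy of a real matrix: the sum of absolute values of its eigenvalues. -/
noncomputable def energy {k : Type*} [Fintype k] [DecidableEq k]
    (M : Matrix k k ℝ) : ℝ :=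
  ((specC M).map (fun z : ℂ => ‖z‖)).sum

lemma charpoly_conj_aux {k R : Type*} [Fintype k] [DecidableEq k] [CommRing R]
    (M U V : Matrix k k R) (hUV : U * V = 1) (hVU : V * U = 1) :
    (V * M * U).charpoly = M.charpoly := by
  have h1 : (C : R →+* R[X]).mapMatrix V * (C : R →+* R[X]).mapMatrix U = 1 := by
    rw [← _root_.map_mul, hVU, _root_.map_one]
  have h2 : (C : R →+* R[X]).mapMatrix U * (C : R →+* R[X]).mapMatrix V = 1 := by
    rw [← _root_.map_mul, hUV, _root_.map_one]
  have key : charmatrix (V * M * U) =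
      (C : R →+* R[X]).mapMatrix V * charmatrix M * (C : R →+* R[X]).mapMatrix U := by
    unfold charmatrix
    rw [_root_.map_mul, _root_.map_mul, mul_sub, sub_mul]
    congr 1
    rw [← (Matrix.scalar_commute (X : R[X]) (fun r' => Commute.all _ _) _).eq, mul_assoc, h1,
      mul_one]
  rw [Matrix.charpoly, key, det_mul, det_mul, Matrix.charpoly]
  rw [mul_comm, ← mul_assoc, ← det_mul, h2, det_one, one_mul]

lemma roots_charpoly_of_triangular {N : ℕ} (M : Matrix (Fin N) (Fin N) ℂ)
    (h : M.BlockTriangular id) :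
    M.charpoly.roots = Finset.univ.val.map (fun i => M i i) := by
  rw [Matrix.charpoly_of_upperTriangular M h]
  have : ∏ i : Fin N, (X - C (M i i)) =
      ((Finset.univ.val.map fun i => M i i).map fun a => X - C a).prod := by
    rw [Multiset.map_map]; rfl
  rw [this, Polynomial.roots_multiset_prod_X_sub_C]

lemma kron_roots {m n : ℕ} [NeZero m]
    (B U V : Matrix (Fin n) (Fin n) ℂ) (hUV : U * V = 1) (hVU : V * U = 1)
    (d : Fin n → ℂ) (hB : V * B * U = Matrix.diagonal d) (ε : ℂ) :
    ((Matrix.of fun (_ _ : Fin m) => (1:ℂ)) ⊗ₖ B + ε • (1 : Matrix (Fin m × Fin n) (Fin m × Fin n) ℂ)).charpoly.roots =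
      Finset.univ.val.map
        (fun p : Fin m × Fin n => if p.1 = 0 then (m:ℂ) * d p.2 + ε else ε) := by
  classical
  set z : Matrix (Fin m) (Fin m) ℂ :=
    Matrix.of fun i k => if k = 0 ∧ i ≠ 0 then (1:ℂ) else 0 with hz
  have hzz : z * z = 0 := by
    ext i j
    rw [Matrix.mul_apply]
    refine Finset.sum_eq_zero fun k _ => ?_
    by_cases hk : k = 0
    · subst hk
      have : z 0 j = 0 := by simp [hz]
      simp [this]
    · have : z i k = 0 := by simp [hz, hk]
      simp [this]
  set P : Matrix (Fin m) (Fin m) ℂ := 1 + z with hP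
  set Q : Matrix (Fin m) (Fin m) ℂ := 1 - z with hQ
  have hPQ : P * Q = 1 := by
    have : P * Q = 1 - z * z := by rw [hP, hQ]; noncomm_ring
    rw [this, hzz, sub_zero]
  have hQP : Q * P = 1 := by
    have : Q * P = 1 - z * z := by rw [hP, hQ]; noncomm_ring
    rw [this, hzz, sub_zero]
  set J : Matrix (Fin m) (Fin m) ℂ := Matrix.of fun _ _ => (1:ℂ) with hJ
  set T : Matrix (Fin m) (Fin m) ℂ :=
    Matrix.of fun i k => if i = 0 then (if k = 0 then (m:ℂ) else 1) else 0 with hTdef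
  have rowz : ∀ i, ∑ k, z i k = if i = 0 then 0 else 1 := by
    intro i
    by_cases hi : i = 0
    · subst hi; simp [hz]
    · simp only [hz, of_apply, hi, ne_eq, not_false_iff, and_true, if_neg]
      simp
  have colz : ∀ j, ∑ l, z l j = if j = 0 then (m:ℂ) - 1 else 0 := by
    intro j
    by_cases hj : j = 0
    · subst hj
      simp only [hz, of_apply, true_and]
      rw [Finset.sum_ite (f := fun _ => (1:ℂ)) (g := fun _ => (0:ℂ))]
      simp only [Finset.sum_const, Finset.sum_const_zero, add_zero, nsmul_eq_mul, mul_one]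
      rw [Finset.filter_ne' Finset.univ 0, Finset.card_erase_of_mem (Finset.mem_univ _)]
      rw [Finset.card_univ, Fintype.card_fin]
      rw [Nat.cast_sub (Nat.one_le_iff_ne_zero.2 (NeZero.ne m))]
      simp
    · simp [hz, hj]
  have rowQ : ∀ i, ∑ k, Q i k = if i = 0 then 1 else 0 := by
    intro i
    simp only [hQ, Matrix.sub_apply, Finset.sum_sub_distrib, rowz]
    have : ∑ x : Fin m, (1 : Matrix (Fin m) (Fin m) ℂ) i x = 1 := by
      simp [Matrix.one_apply]
    rw [this]; split_ifs <;> ring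
  have colP : ∀ j, ∑ l, P l j = if j = 0 then (m:ℂ) else 1 := by
    intro j
    simp only [hP, Matrix.add_apply, Finset.sum_add_distrib, colz]
    have : ∑ x : Fin m, (1 : Matrix (Fin m) (Fin m) ℂ) x j = 1 := by
      simp [Matrix.one_apply]
    rw [this]; split_ifs <;> ring
  have hT : Q * J * P = T := by
    ext i j
    rw [Matrix.mul_apply]
    have h1 : ∀ l, (Q * J) i l = ∑ k, Q i k := by
      intro l
      rw [Matrix.mul_apply]
      refine Finset.sum_congr rfl fun k _ => ?_
      simp [hJ]
    simp only [h1]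
    rw [← Finset.mul_sum, rowQ, colP]
    simp only [hTdef, of_apply]
    split_ifs <;> ring
  have hW1 : (P ⊗ₖ U) * (Q ⊗ₖ V) = 1 := by
    rw [← Matrix.mul_kronecker_mul, hPQ, hUV, Matrix.one_kronecker_one]
  have hW2 : (Q ⊗ₖ V) * (P ⊗ₖ U) = 1 := by
    rw [← Matrix.mul_kronecker_mul, hQP, hVU, Matrix.one_kronecker_one]
  have key : (Q ⊗ₖ V) * (J ⊗ₖ B + ε • (1 : Matrix (Fin m × Fin n) (Fin m × Fin n) ℂ)) * (P ⊗ₖ U)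
      = T ⊗ₖ Matrix.diagonal d + ε • (1 : Matrix (Fin m × Fin n) (Fin m × Fin n) ℂ) := by
    rw [mul_add, add_mul]
    congr 1
    · rw [← Matrix.mul_kronecker_mul, ← Matrix.mul_kronecker_mul, hT, hB]
    · rw [Matrix.mul_smul, Matrix.smul_mul, mul_one, hW2]
  have hcp : (J ⊗ₖ B + ε • (1 : Matrix (Fin m × Fin n) (Fin m × Fin n) ℂ)).charpoly
      = (T ⊗ₖ Matrix.diagonal d + ε • (1 : Matrix (Fin m × Fin n) (Fin m × Fin n) ℂ)).charpoly := by
    rw [← key]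
    exact (charpoly_conj_aux _ (P ⊗ₖ U) (Q ⊗ₖ V) hW1 hW2).symm
  set N : Matrix (Fin m × Fin n) (Fin m × Fin n) ℂ :=
    T ⊗ₖ Matrix.diagonal d + ε • (1 : Matrix (Fin m × Fin n) (Fin m × Fin n) ℂ) with hN
  have hNdiag : ∀ p : Fin m × Fin n, N p p = if p.1 = 0 then (m:ℂ) * d p.2 + ε else ε := by
    rintro ⟨i, j⟩
    simp only [hN, Matrix.add_apply, Matrix.kronecker_apply, Matrix.smul_apply, Matrix.one_apply_eq,
      Matrix.diagonal_apply_eq, hTdef, of_apply, smul_eq_mul, mul_one]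
    split_ifs <;> ring
  have hNoff : ∀ p q : Fin m × Fin n,
      (finProdFinEquiv q : ℕ) < (finProdFinEquiv p : ℕ) → N p q = 0 := by
    rintro ⟨i, j⟩ ⟨k, l⟩ hlt
    have hne : ((i, j) : Fin m × Fin n) ≠ (k, l) := by
      rintro h
      rw [h] at hlt
      exact lt_irrefl _ hlt
    simp only [hN, Matrix.add_apply, Matrix.kronecker_apply, Matrix.smul_apply,
      Matrix.one_apply_ne hne, smul_eq_mul, mul_zero, add_zero, hTdef, of_apply]
    by_cases hi : i = 0
    · by_cases hjl : j = l
      · exfalso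
        subst hjl
        subst hi
        simp only [finProdFinEquiv_apply_val, Fin.val_zero] at hlt
        omega
      · rw [Matrix.diagonal_apply_ne _ hjl, mul_zero]
    · rw [if_neg hi, zero_mul]
  set e := (finProdFinEquiv : Fin m × Fin n ≃ Fin (m * n)) with he
  have htri : (Matrix.reindex e e N).BlockTriangular id := by
    intro r s hrs
    simp only [Matrix.reindex_apply, Matrix.submatrix_apply]
    refine hNoff _ _ ?_
    have h1 : e (e.symm s) = s := e.apply_symm_apply s
    have h2 : e (e.symm r) = r := e.apply_symm_apply r
    rw [h1, h2]
    exact hrs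
  have hroots : N.charpoly.roots = Finset.univ.val.map (fun r => (Matrix.reindex e e N) r r) := by
    rw [← Matrix.charpoly_reindex e N]
    exact roots_charpoly_of_triangular _ htri
  rw [hcp, hroots]
  have : (fun r : Fin (m * n) => (Matrix.reindex e e N) r r)
      = (fun p : Fin m × Fin n => if p.1 = 0 then (m:ℂ) * d p.2 + ε else ε) ∘ e.symm := by
    funext r
    simp only [Matrix.reindex_apply, Matrix.submatrix_apply, Function.comp_apply]
    exact hNdiag _
  rw [this, ← Multiset.map_map]
  congr 1
  have h := congrArg Finset.val (Finset.map_univ_equiv e.symm)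
  rw [Finset.map_val] at h
  simpa using h

lemma sum_ite_fin {m : ℕ} [NeZero m] (x y : ℝ) :
    ∑ i : Fin m, (if i = 0 then x else y) = x + ((m:ℝ) - 1) * y := by
  have h : ∀ i : Fin m, (if i = (0:Fin m) then x else y) = y + (if i = 0 then x - y else 0) := by
    intro i; split_ifs <;> ring
  simp only [h, Finset.sum_add_distrib, Finset.sum_const,
    Finset.sum_ite_eq' Finset.univ (0:Fin m) (fun _ => x - y)]
  simp only [Finset.card_univ, Fintype.card_fin, Finset.mem_univ, if_true, nsmul_eq_mul, mul_one]
  ring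

lemma spec_diag {n : ℕ} {S : Matrix (Fin n) (Fin n) ℝ} (hS : S.IsHermitian) :
    ∃ (U V : Matrix (Fin n) (Fin n) ℂ), U * V = 1 ∧ V * U = 1 ∧
      V * (S.map Complex.ofReal) * U = Matrix.diagonal (fun i => (hS.eigenvalues i : ℂ)) := by
  classical
  set U₀ : Matrix (Fin n) (Fin n) ℝ := (hS.eigenvectorUnitary : Matrix (Fin n) (Fin n) ℝ) with hU₀
  have h1 : U₀ * star U₀ = 1 := Unitary.coe_mul_star_self _
  have h2 : star U₀ * U₀ = 1 := Unitary.coe_star_mul_self _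
  have h3 : star U₀ * S * U₀ = Matrix.diagonal hS.eigenvalues := by
    have := hS.conjStarAlgAut_star_eigenvectorUnitary
    simpa [Unitary.conjStarAlgAut_apply] using this
  refine ⟨U₀.map Complex.ofReal, (star U₀).map Complex.ofReal, ?_, ?_, ?_⟩
  · rw [show (Complex.ofReal : ℝ → ℂ) = ⇑Complex.ofRealHom from rfl,
      ← Matrix.map_mul, h1, Matrix.map_one _ (map_zero _) (map_one _)]
  · rw [show (Complex.ofReal : ℝ → ℂ) = ⇑Complex.ofRealHom from rfl,
      ← Matrix.map_mul, h2, Matrix.map_one _ (map_zero _) (map_one _)]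
  · rw [show (Complex.ofReal : ℝ → ℂ) = ⇑Complex.ofRealHom from rfl,
      ← Matrix.map_mul, ← Matrix.map_mul, h3, Matrix.diagonal_map (map_zero _)]

lemma seidel_isHermitian {n : ℕ} (G : SimpleGraph (Fin n)) [DecidableRel G.Adj] :
    (seidelOf (G.adjMatrix ℝ)).IsHermitian := by
  show _ = _
  ext i j
  simp only [Matrix.conjTranspose_apply, seidelOf, allOnes, Matrix.sub_apply, Matrix.smul_apply,
    Matrix.of_apply, Matrix.one_apply, SimpleGraph.adjMatrix_apply, starRingEnd_apply, star_trivial]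
  have h2 : (if G.Adj j i then (1:ℝ) else 0) = (if G.Adj i j then 1 else 0) := by
    simp only [G.adj_comm]
  have h1 : (if j = i then (1:ℝ) else 0) = (if i = j then 1 else 0) := by
    simp only [eq_comm]
  rw [h1, h2]

lemma map1_eq {m n : ℕ} (G : SimpleGraph (Fin n)) [DecidableRel G.Adj] :
    (seidelOf (allOnes (Fin m) ⊗ₖ G.adjMatrix ℝ)).map Complex.ofReal
      = (Matrix.of fun (_ _ : Fin m) => (1:ℂ)) ⊗ₖ
          (((seidelOf (G.adjMatrix ℝ)).map Complex.ofReal) + 1)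
        + (-1 : ℂ) • (1 : Matrix (Fin m × Fin n) (Fin m × Fin n) ℂ) := by
  ext ⟨i, j⟩ ⟨k, l⟩
  simp only [Matrix.map_apply, seidelOf, allOnes, Matrix.sub_apply, Matrix.add_apply,
    Matrix.smul_apply, Matrix.kronecker_apply, Matrix.of_apply, Matrix.one_apply, smul_eq_mul,
    Prod.mk.injEq]
  by_cases h1 : i = k <;> by_cases h2 : j = l <;>
    simp only [h1, h2, and_self, if_true, if_false, true_and, false_and, and_false] <;>
    push_cast <;> ring

lemma map2_eq {m n : ℕ} (G : SimpleGraph (Fin n)) [DecidableRel G.Adj] :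
    (seidelOf (allOnes (Fin m) ⊗ₖ (G.adjMatrix ℝ + 1) - 1)).map Complex.ofReal
      = (Matrix.of fun (_ _ : Fin m) => (1:ℂ)) ⊗ₖ
          (((seidelOf (G.adjMatrix ℝ)).map Complex.ofReal) - 1)
        + (1 : ℂ) • (1 : Matrix (Fin m × Fin n) (Fin m × Fin n) ℂ) := by
  ext ⟨i, j⟩ ⟨k, l⟩
  simp only [Matrix.map_apply, seidelOf, allOnes, Matrix.sub_apply, Matrix.add_apply,
    Matrix.smul_apply, Matrix.kronecker_apply, Matrix.of_apply, Matrix.one_apply, smul_eq_mul,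
    Prod.mk.injEq]
  by_cases h1 : i = k <;> by_cases h2 : j = l <;>
    simp only [h1, h2, and_self, if_true, if_false, true_and, false_and, and_false] <;>
    push_cast <;> ring

theorem equienergetic_iff {m n : ℕ} (hm : 2 ≤ m) (G : SimpleGraph (Fin n))
    [DecidableRel G.Adj] (σ : Fin n → ℝ)
    (hspec : specC (seidelOf (G.adjMatrix ℝ)) =
      (Finset.univ.val.map fun i => ((σ i : ℝ) : ℂ)))
    (habs : ∀ i, |σ i| > ((m : ℝ) - 1) / m) :
    energy (seidelOf (allOnes (Fin m) ⊗ₖ G.adjMatrix ℝ)) =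
      energy (seidelOf (allOnes (Fin m) ⊗ₖ (G.adjMatrix ℝ + 1) - 1)) ↔
    (Finset.univ.filter fun i => 0 < σ i).card =
      (Finset.univ.filter fun i => σ i < 0).card := by
  classical
  haveI : NeZero m := ⟨by omega⟩
  have hS : (seidelOf (G.adjMatrix ℝ)).IsHermitian := seidel_isHermitian G
  set μ : Fin n → ℝ := hS.eigenvalues with hμdef
  obtain ⟨U, V, hUV, hVU, hdiag⟩ := spec_diag hS
  have hspecS : specC (seidelOf (G.adjMatrix ℝ)) =
      Finset.univ.val.map (fun i => ((μ i : ℝ) : ℂ)) := by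
    unfold specC
    rw [← charpoly_conj_aux ((seidelOf (G.adjMatrix ℝ)).map Complex.ofReal) U V hUV hVU, hdiag,
      roots_charpoly_of_triangular _ (Matrix.blockTriangular_diagonal _)]
    simp
    exact List.Perm.refl _
  have hμσ : Multiset.map μ Finset.univ.val = Multiset.map σ Finset.univ.val := by
    apply Multiset.map_injective Complex.ofReal_injective
    rw [Multiset.map_map, Multiset.map_map]
    exact hspecS.symm.trans hspec
  have hmR : (0:ℝ) < m := by
    have : (2:ℝ) ≤ (m:ℝ) := by exact_mod_cast hm
    linarith
  have hm1 : (1:ℝ) ≤ (m:ℝ) - 1 := by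
    have : (2:ℝ) ≤ (m:ℝ) := by exact_mod_cast hm
    linarith
  have habsμ : ∀ j, ((m:ℝ) - 1) / m < |μ j| := by
    intro j
    have hmem : μ j ∈ Multiset.map μ Finset.univ.val :=
      Multiset.mem_map_of_mem _ (Finset.mem_univ j)
    rw [hμσ] at hmem
    obtain ⟨i, -, hi⟩ := Multiset.mem_map.mp hmem
    rw [← hi]
    exact habs i
  have habsμ' : ∀ j, (m:ℝ) - 1 < (m:ℝ) * |μ j| := by
    intro j
    have := (div_lt_iff₀ hmR).mp (habsμ j)
    linarith
  have hμne : ∀ j, μ j ≠ 0 := by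
    intro j h
    have := habsμ' j
    rw [h] at this
    simp at this
    linarith
  have hμpos : ∀ j, 0 < μ j → (m:ℝ) - 1 < (m:ℝ) * μ j := by
    intro j hj
    have := habsμ' j
    rwa [abs_of_pos hj] at this
  have hμneg : ∀ j, μ j < 0 → (m:ℝ) * μ j < -((m:ℝ) - 1) := by
    intro j hj
    have := habsμ' j
    rw [abs_of_neg hj] at this
    linarith [this]
  have hB1 : V * (((seidelOf (G.adjMatrix ℝ)).map Complex.ofReal) + 1) * U
      = Matrix.diagonal (fun i => ((μ i : ℂ) + 1)) := by
    rw [mul_add, add_mul, hdiag, mul_one, hVU, ← Matrix.diagonal_one, Matrix.diagonal_add]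
  have hB2 : V * (((seidelOf (G.adjMatrix ℝ)).map Complex.ofReal) - 1) * U
      = Matrix.diagonal (fun i => ((μ i : ℂ) - 1)) := by
    rw [mul_sub, sub_mul, hdiag, mul_one, hVU, ← Matrix.diagonal_one, Matrix.diagonal_sub]
  have hs1 : specC (seidelOf (allOnes (Fin m) ⊗ₖ G.adjMatrix ℝ)) =
      Finset.univ.val.map (fun p : Fin m × Fin n =>
        if p.1 = 0 then (m:ℂ) * ((μ p.2 : ℂ) + 1) + (-1) else (-1)) := by
    unfold specC
    rw [map1_eq]
    exact kron_roots _ U V hUV hVU _ hB1 (-1)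
  have hs2 : specC (seidelOf (allOnes (Fin m) ⊗ₖ (G.adjMatrix ℝ + 1) - 1)) =
      Finset.univ.val.map (fun p : Fin m × Fin n =>
        if p.1 = 0 then (m:ℂ) * ((μ p.2 : ℂ) - 1) + 1 else 1) := by
    unfold specC
    rw [map2_eq]
    exact kron_roots _ U V hUV hVU _ hB2 1
  have hen : ∀ (M : Matrix (Fin m × Fin n) (Fin m × Fin n) ℝ) (g : Fin m × Fin n → ℂ),
      specC M = Finset.univ.val.map g → energy M = ∑ p : Fin m × Fin n, ‖g p‖ := by
    intro M g h
    rw [energy, h, Multiset.map_map]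
    rfl
  set X := ∑ j, |(m:ℝ) * μ j + ((m:ℝ) - 1)| with hX
  set Y := ∑ j, |(m:ℝ) * μ j - ((m:ℝ) - 1)| with hY
  have he1 : energy (seidelOf (allOnes (Fin m) ⊗ₖ G.adjMatrix ℝ)) = X + ((m:ℝ)-1) * n := by
    rw [hen _ _ hs1, Fintype.sum_prod_type]
    have hinner : ∀ i : Fin m,
        (∑ j, ‖(if (i, j).1 = 0 then (m:ℂ) * ((μ (i, j).2 : ℂ) + 1) + (-1) else (-1))‖)
        = if i = 0 then X else (n:ℝ) := by
      intro i
      by_cases hi : i = 0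
      · simp only [hi, if_true, hX]
        refine Finset.sum_congr rfl fun j _ => ?_
        rw [show (m:ℂ) * ((μ j : ℂ) + 1) + (-1) = ((((m:ℝ) * μ j + ((m:ℝ)-1)) : ℝ) : ℂ) by
          push_cast; ring]
        exact (Complex.norm_real _).trans (Real.norm_eq_abs _)
      · simp [hi]
    simp only [hinner]
    rw [sum_ite_fin]
  have he2 : energy (seidelOf (allOnes (Fin m) ⊗ₖ (G.adjMatrix ℝ + 1) - 1))
      = Y + ((m:ℝ)-1) * n := by
    rw [hen _ _ hs2, Fintype.sum_prod_type]
    have hinner : ∀ i : Fin m,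
        (∑ j, ‖(if (i, j).1 = 0 then (m:ℂ) * ((μ (i, j).2 : ℂ) - 1) + 1 else 1)‖)
        = if i = 0 then Y else (n:ℝ) := by
      intro i
      by_cases hi : i = 0
      · simp only [hi, if_true, hY]
        refine Finset.sum_congr rfl fun j _ => ?_
        rw [show (m:ℂ) * ((μ j : ℂ) - 1) + 1 = ((((m:ℝ) * μ j - ((m:ℝ)-1)) : ℝ) : ℂ) by
          push_cast; ring]
        exact (Complex.norm_real _).trans (Real.norm_eq_abs _)
      · simp [hi]
    simp only [hinner]
    rw [sum_ite_fin]
  set cp := (Finset.univ.filter fun j => 0 < μ j).card with hcp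
  set cm := (Finset.univ.filter fun j => μ j < 0).card with hcm
  have hXY : X - Y = 2*((m:ℝ)-1) * (cp:ℝ) - 2*((m:ℝ)-1) * (cm:ℝ) := by
    rw [hX, hY, ← Finset.sum_sub_distrib]
    have hterm : ∀ j : Fin n, |(m:ℝ) * μ j + ((m:ℝ)-1)| - |(m:ℝ)*μ j - ((m:ℝ)-1)|
        = if 0 < μ j then 2*((m:ℝ)-1) else -(2*((m:ℝ)-1)) := by
      intro j
      rcases lt_or_gt_of_ne (hμne j) with hneg | hpos
      · rw [if_neg (not_lt_of_gt hneg)]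
        have h1 := hμneg j hneg
        rw [abs_of_neg (by linarith), abs_of_neg (by linarith : (m:ℝ)*μ j - ((m:ℝ)-1) < 0)]
        ring
      · rw [if_pos hpos]
        have h1 := hμpos j hpos
        rw [abs_of_pos (by linarith), abs_of_pos (by linarith)]
        ring
    simp only [hterm]
    rw [Finset.sum_ite, Finset.sum_const, Finset.sum_const]
    have hfilt : (Finset.univ.filter (fun j => ¬ 0 < μ j)) =
        (Finset.univ.filter (fun j => μ j < 0)) := by
      apply Finset.filter_congr
      intro j _
      constructor
      · intro h
        exact lt_of_le_of_ne (not_lt.mp h) (hμne j)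
      · intro h
        exact not_lt_of_gt h
    rw [hfilt, ← hcp, ← hcm]
    simp only [nsmul_eq_mul]
    ring
  have hcount : ∀ (p : ℝ → Prop) (_ : DecidablePred p),
      (Finset.univ.filter (fun i => p (σ i))).card
        = (Finset.univ.filter (fun i => p (μ i))).card := by
    intro p hp
    have h1 := Multiset.countP_map μ Finset.univ.val p
    have h2 := Multiset.countP_map σ Finset.univ.val p
    rw [hμσ, h2] at h1
    have e1 : (Finset.univ.filter (fun i => p (σ i))).card
        = Multiset.card (Multiset.filter (fun a => p (σ a)) Finset.univ.val) := by
      rw [Finset.card, Finset.filter_val]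
    have e2 : (Finset.univ.filter (fun i => p (μ i))).card
        = Multiset.card (Multiset.filter (fun a => p (μ a)) Finset.univ.val) := by
      rw [Finset.card, Finset.filter_val]
    rw [e1, e2, h1]
  rw [he1, he2, add_left_inj]
  have hcs1 : (Finset.univ.filter fun i => 0 < σ i).card = cp := by
    rw [hcp]; exact hcount (fun x => 0 < x) inferInstance
  have hcs2 : (Finset.univ.filter fun i => σ i < 0).card = cm := by
    rw [hcm]; exact hcount (fun x => x < 0) inferInstance
  rw [hcs1, hcs2]
  constructor
  · intro h
    have h0 : X - Y = 0 := by rw [h]; ring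
    rw [hXY] at h0
    have hne : 2*((m:ℝ)-1) ≠ 0 := by positivity
    have : (cp:ℝ) = (cm:ℝ) := by
      have h3 : 2*((m:ℝ)-1) * ((cp:ℝ) - (cm:ℝ)) = 0 := by ring_nf; ring_nf at h0; linarith
      rcases mul_eq_zero.mp h3 with h4 | h4
      · exact absurd h4 hne
      · linarith [sub_eq_zero.mp h4]
    exact_mod_cast this
  · intro h
    have : (cp:ℝ) = (cm:ℝ) := by exact_mod_cast h
    have h0 : X - Y = 0 := by rw [hXY, this]; ring
    linarith
end

section
/- If G has Seidel spectrum {σ_1,...,σ_n}, then D_m(D_m^*(G)) has Seidel spectrum {m²σ_i - (m-1)² : i = 1,...,n} together with the eigenvalue 2m-1 with multiplicity mn - n and the eigenvalue -1 with multiplicity m²n - mn. -/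
open Matrix Kronecker BigOperators Finset

open Polynomial

section Helpers

variable {K : Type*} [CommRing K] {k : Type*} [Fintype k] [DecidableEq k]

lemma my_charpoly_conj (P Pi M : Matrix k k K) (h1 : Pi * P = 1) :
    (Pi * M * P).charpoly = M.charpoly := by
  have hmap : Pi.map (Polynomial.C : K → K[X]) * P.map Polynomial.C = 1 := by
    rw [← Matrix.map_mul (f := (Polynomial.C : K →+* K[X])), h1,
      Matrix.map_one _ (map_zero _) (map_one _)]
  have hch : charmatrix (Pi * M * P)
      = Pi.map Polynomial.C * charmatrix M * P.map Polynomial.C := by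
    unfold charmatrix
    rw [mul_sub, sub_mul]
    congr 1
    · rw [scalar_apply, ← smul_one_eq_diagonal, mul_smul_comm, smul_mul_assoc, mul_one, hmap]
    · rw [RingHom.mapMatrix_apply, RingHom.mapMatrix_apply,
        ← Matrix.map_mul (f := (Polynomial.C : K →+* K[X])),
        ← Matrix.map_mul (f := (Polynomial.C : K →+* K[X]))]
  unfold Matrix.charpoly
  rw [hch, det_mul, det_mul, mul_right_comm, ← det_mul, hmap, det_one, one_mul]

lemma my_charpoly_diagonal (d : k → K) :
    (diagonal d).charpoly = ∏ i, (X - Polynomial.C (d i)) := by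
  unfold Matrix.charpoly
  have h : charmatrix (diagonal d) = diagonal (fun i => X - Polynomial.C (d i)) := by
    ext i j
    by_cases h : i = j
    · subst h; rw [charmatrix_apply_eq, diagonal_apply_eq, diagonal_apply_eq]
    · rw [charmatrix_apply_ne _ _ _ h, diagonal_apply_ne _ h, diagonal_apply_ne _ h,
        map_zero, neg_zero]
  rw [h, det_diagonal]

lemma my_roots_charpoly_diagonal (d : k → ℂ) :
    (diagonal d).charpoly.roots = (univ : Finset k).val.map d := by
  rw [my_charpoly_diagonal, Finset.prod_eq_multiset_prod]
  have h : Multiset.map (fun i => X - Polynomial.C (d i)) (univ : Finset k).val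
      = Multiset.map (fun a : ℂ => X - Polynomial.C a) (Multiset.map d (univ : Finset k).val) := by
    rw [Multiset.map_map]; rfl
  rw [h, Polynomial.roots_multiset_prod_X_sub_C]

lemma my_bind_replicate {α γ : Type*} (s : Multiset α) (c : γ) (N : ℕ) :
    (s.bind fun _ => Multiset.replicate N c) = Multiset.replicate (Multiset.card s * N) c := by
  induction s using Multiset.induction_on with
  | empty => simp
  | cons a s ih =>
      rw [Multiset.cons_bind, ih, Multiset.card_cons, add_mul, one_mul,
        Multiset.replicate_add, add_comm]

lemma my_map_univ_prod {α β γ : Type*} [Fintype α] [Fintype β] (f : α × β → γ) :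
    ((univ : Finset (α × β)).val).map f
      = (univ : Finset α).val.bind
          (fun a => (univ : Finset β).val.map fun b => f (a, b)) := by
  rw [← Finset.univ_product_univ, Finset.product_val]
  show ((univ : Finset α).val.bind fun a => (univ : Finset β).val.map (Prod.mk a)).map f = _
  rw [Multiset.map_bind]
  simp [Multiset.map_map, Function.comp]

end Helpers

theorem seidel_spectrum_DmDmstar {m n : ℕ} (hm : 1 ≤ m) (G : SimpleGraph (Fin n))
    [DecidableRel G.Adj] :
    specC (seidelOf (allOnes (Fin m) ⊗ₖ (allOnes (Fin m) ⊗ₖ (G.adjMatrix ℝ + 1) - 1))) =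
      (specC (seidelOf (G.adjMatrix ℝ))).map
          (fun σ => (m : ℂ) ^ 2 * σ - ((m : ℂ) - 1) ^ 2) +
        Multiset.replicate (m * n - n) (2 * (m : ℂ) - 1) +
        Multiset.replicate (m ^ 2 * n - m * n) (-1 : ℂ) := by
  classical
  haveI : NeZero m := ⟨by omega⟩
  have hm0 : (m : ℂ) ≠ 0 := Nat.cast_ne_zero.mpr (by omega)
  set A : Matrix (Fin n) (Fin n) ℝ := G.adjMatrix ℝ with hAdef
  set S : Matrix (Fin n) (Fin n) ℝ := seidelOf A with hSdef
  set Sc : Matrix (Fin n) (Fin n) ℂ := S.map Complex.ofReal with hScdef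
  -- symmetry
  have hsymm : ∀ i j, S i j = S j i := by
    intro i j
    by_cases h : i = j
    · subst h; rfl
    · have h' : ¬ j = i := fun e => h e.symm
      simp only [hSdef, seidelOf, hAdef, Matrix.sub_apply, Matrix.smul_apply, allOnes, of_apply,
        Matrix.one_apply, SimpleGraph.adjMatrix_apply, smul_eq_mul, if_neg h, if_neg h',
        G.adj_comm i j]
  have hS : Sc.IsHermitian := by
    ext i j
    simp only [hScdef, conjTranspose_apply, Matrix.map_apply, Complex.star_def,
      Complex.conj_ofReal]
    exact congrArg _ (hsymm j i)
  set lam : Fin n → ℝ := hS.eigenvalues with hlam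
  set U : Matrix (Fin n) (Fin n) ℂ := (hS.eigenvectorUnitary : Matrix (Fin n) (Fin n) ℂ) with hUdef
  have hU1 : star U * U = 1 := mem_unitaryGroup_iff'.mp (hS.eigenvectorUnitary).2
  have hdiag : star U * Sc * U = diagonal (fun j => (lam j : ℂ)) := by
    have := hS.conjStarAlgAut_star_eigenvectorUnitary
    rw [Unitary.conjStarAlgAut_star_apply] at this
    exact this
  -- spectrum of S
  have hspecS : specC S = Multiset.map (fun j => (lam j : ℂ)) (univ : Finset (Fin n)).val := by
    show ((S.map Complex.ofReal).charpoly).roots = _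
    rw [← hScdef]
    have h1 : Sc.charpoly = (diagonal fun j => (lam j : ℂ)).charpoly := by
      rw [← hdiag]
      exact (my_charpoly_conj U (star U) Sc hU1).symm
    rw [h1, my_roots_charpoly_diagonal]
  -- explicit conjugating matrices
  set Q : Matrix (Fin m) (Fin m) ℂ := Matrix.of (fun i j =>
      if j = 0 then 1 else (if i = j then (1:ℂ) else 0) - (if i = 0 then 1 else 0)) with hQdef
  set R : Matrix (Fin m) (Fin m) ℂ := Matrix.of (fun i j =>
      if i = 0 then (m:ℂ)⁻¹ else (if i = j then (1:ℂ) else 0) - (m:ℂ)⁻¹) with hRdef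
  set Jc : Matrix (Fin m) (Fin m) ℂ := Matrix.of (fun _ _ => (1:ℂ)) with hJcdef
  have hsumR : ∀ i, ∑ x : Fin m, R i x = if i = 0 then (1:ℂ) else 0 := by
    intro i
    by_cases hi : i = 0
    · have h : ∀ x : Fin m, R i x = (m:ℂ)⁻¹ := fun x => by simp [hRdef, hi]
      rw [Finset.sum_congr rfl fun x _ => h x, Finset.sum_const, Finset.card_univ,
        Fintype.card_fin, nsmul_eq_mul, mul_inv_cancel₀ hm0, if_pos hi]
    · have h : ∀ x : Fin m, R i x = (if i = x then (1:ℂ) else 0) - (m:ℂ)⁻¹ := fun x => by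
        simp [hRdef, hi]
      rw [Finset.sum_congr rfl fun x _ => h x, Finset.sum_sub_distrib, Finset.sum_ite_eq,
        Finset.sum_const, Finset.card_univ, Fintype.card_fin, nsmul_eq_mul,
        mul_inv_cancel₀ hm0, if_pos (Finset.mem_univ i), if_neg hi, sub_self]
  have hRQ : R * Q = 1 := by
    ext i j
    rw [mul_apply, Matrix.one_apply]
    by_cases hj : j = 0
    · subst hj
      have hQ1 : ∀ x : Fin m, Q x (0 : Fin m) = 1 := fun x => by simp [hQdef]
      rw [Finset.sum_congr rfl fun x _ => by rw [hQ1, mul_one], hsumR]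
    · have hQ2 : ∀ x : Fin m, Q x j = (if x = j then (1:ℂ) else 0) - (if x = 0 then 1 else 0) :=
        fun x => by simp [hQdef, hj]
      have hsum : ∑ x : Fin m, R i x * Q x j = R i j - R i 0 := by
        rw [Finset.sum_congr rfl fun x _ => by rw [hQ2 x]]
        simp only [mul_sub, mul_ite, mul_one, mul_zero]
        rw [Finset.sum_sub_distrib, Finset.sum_ite_eq', Finset.sum_ite_eq']
        simp
      rw [hsum]
      by_cases hi : i = 0
      · subst hi
        simp [hRdef, show ¬(0:Fin m) = j from fun h => hj h.symm]
      · simp [hRdef, hi, hj]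
  have hRJQ : R * (Jc * Q) = diagonal (fun i : Fin m => if i = 0 then (m:ℂ) else 0) := by
    have hJQ : Jc * Q = Matrix.of (fun _ j => if j = 0 then (m:ℂ) else 0) := by
      ext i j
      rw [mul_apply]
      have hj1 : ∀ x : Fin m, Jc i x * Q x j = Q x j := fun x => by simp [hJcdef]
      rw [Finset.sum_congr rfl fun x _ => hj1 x]
      by_cases hj : j = 0
      · subst hj
        have h : ∀ x : Fin m, Q x (0:Fin m) = 1 := fun x => by simp [hQdef]
        rw [Finset.sum_congr rfl fun x _ => h x, Finset.sum_const, Finset.card_univ,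
          Fintype.card_fin, nsmul_eq_mul, mul_one]
        simp
      · have hQ2 : ∀ x : Fin m, Q x j = (if x = j then (1:ℂ) else 0) - (if x = 0 then 1 else 0) :=
          fun x => by simp [hQdef, hj]
        rw [Finset.sum_congr rfl fun x _ => hQ2 x, Finset.sum_sub_distrib,
          Finset.sum_ite_eq', Finset.sum_ite_eq']
        simp [hj]
    rw [hJQ]
    ext i j
    rw [mul_apply]
    have h : ∀ x : Fin m, R i x * (Matrix.of (fun _ j => if j = 0 then (m:ℂ) else 0)) x j
        = R i x * (if j = 0 then (m:ℂ) else 0) := fun x => by simp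
    rw [Finset.sum_congr rfl fun x _ => h x, ← Finset.sum_mul, hsumR]
    by_cases hi : i = 0 <;> by_cases hj : j = 0
    · subst hi; subst hj; simp [diagonal_apply]
    · subst hi
      simp [diagonal_apply, hj, show ¬(0:Fin m) = j from fun h => hj h.symm]
    · subst hj
      simp [diagonal_apply, hi]
    · simp [diagonal_apply, hi, hj]
  -- the big matrix over ℂ
  set Bc : Matrix (Fin m × Fin m × Fin n) (Fin m × Fin m × Fin n) ℂ :=
    Jc ⊗ₖ (Jc ⊗ₖ (Sc - 1)) + Jc ⊗ₖ (1 : Matrix (Fin m × Fin n) (Fin m × Fin n) ℂ)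
      + Jc ⊗ₖ (1 : Matrix (Fin m × Fin n) (Fin m × Fin n) ℂ) - 1 with hBcdef
  have hBmap : (seidelOf (allOnes (Fin m) ⊗ₖ (allOnes (Fin m) ⊗ₖ (A + 1) - 1))).map
      Complex.ofReal = Bc := by
    ext x y
    obtain ⟨i, j, k⟩ := x
    obtain ⟨i', j', k'⟩ := y
    simp only [hBcdef, hScdef, hSdef, hAdef, seidelOf, allOnes, hJcdef, Matrix.map_apply,
      Matrix.sub_apply, Matrix.add_apply, Matrix.smul_apply, Matrix.one_apply, kroneckerMap_apply, of_apply,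
      SimpleGraph.adjMatrix_apply, Prod.mk.injEq]
    simp only [nsmul_eq_mul, Nat.cast_ofNat]
    push_cast [apply_ite Complex.ofReal]
    split_ifs <;> first | ring | tauto
  set e : Fin m → ℂ := fun i => if i = 0 then (m:ℂ) else 0 with hedef
  set d : Fin m × Fin m × Fin n → ℂ :=
    fun x => e x.1 * (e x.2.1 * ((lam x.2.2 : ℂ) - 1)) + e x.1 + e x.1 - 1 with hddef
  have hPiP : (R ⊗ₖ (R ⊗ₖ star U)) * (Q ⊗ₖ (Q ⊗ₖ U)) = 1 := by
    rw [← mul_kronecker_mul, ← mul_kronecker_mul, hRQ, hU1, one_kronecker_one,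
      one_kronecker_one]
  have hconj : (R ⊗ₖ (R ⊗ₖ star U)) * Bc * (Q ⊗ₖ (Q ⊗ₖ U)) = diagonal d := by
    have hSU : star U * (Sc - 1) * U = diagonal (fun j => (lam j : ℂ) - 1) := by
      rw [mul_sub, sub_mul, mul_one, hdiag, hU1, ← diagonal_one, diagonal_sub]
    have h1 : (R ⊗ₖ (R ⊗ₖ star U)) * (Jc ⊗ₖ (Jc ⊗ₖ (Sc - 1))) * (Q ⊗ₖ (Q ⊗ₖ U))
        = diagonal (fun x : Fin m × Fin m × Fin n =>
            e x.1 * (e x.2.1 * ((lam x.2.2 : ℂ) - 1))) := by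
      rw [← mul_kronecker_mul, ← mul_kronecker_mul, ← mul_kronecker_mul, ← mul_kronecker_mul,
        mul_assoc R Jc Q, hRJQ, hSU, diagonal_kronecker_diagonal, diagonal_kronecker_diagonal]
    have h2 : (R ⊗ₖ (R ⊗ₖ star U)) * (Jc ⊗ₖ (1 : Matrix (Fin m × Fin n) (Fin m × Fin n) ℂ))
        * (Q ⊗ₖ (Q ⊗ₖ U)) = diagonal (fun x : Fin m × Fin m × Fin n => e x.1) := by
      rw [show (1 : Matrix (Fin m × Fin n) (Fin m × Fin n) ℂ)
          = (1 : Matrix (Fin m) (Fin m) ℂ) ⊗ₖ (1 : Matrix (Fin n) (Fin n) ℂ) from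
          one_kronecker_one.symm,
        ← mul_kronecker_mul, ← mul_kronecker_mul, ← mul_kronecker_mul, ← mul_kronecker_mul,
        mul_assoc R Jc Q, hRJQ, mul_one R, hRQ, mul_one (star U), hU1, one_kronecker_one,
        ← diagonal_one, diagonal_kronecker_diagonal]
      exact congrArg Matrix.diagonal (funext fun x => mul_one _)
    rw [hBcdef]
    simp only [mul_add, add_mul, mul_sub, sub_mul, mul_one, one_mul]
    rw [h1, h2, hPiP, ← diagonal_one, diagonal_add, diagonal_add, diagonal_sub]
  -- the spectrum of the big matrix
  have hbig : specC (seidelOf (allOnes (Fin m) ⊗ₖ (allOnes (Fin m) ⊗ₖ (A + 1) - 1)))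
      = (univ : Finset (Fin m × Fin m × Fin n)).val.map d := by
    show ((seidelOf (allOnes (Fin m) ⊗ₖ (allOnes (Fin m) ⊗ₖ (A + 1) - 1))).map
      Complex.ofReal).charpoly.roots = _
    rw [hBmap, ← my_charpoly_conj (Q ⊗ₖ (Q ⊗ₖ U)) (R ⊗ₖ (R ⊗ₖ star U)) Bc hPiP, hconj,
      my_roots_charpoly_diagonal]
  rw [hbig, hspecS]
  have h0mem : (0 : Fin m) ∈ (univ : Finset (Fin m)).val := Finset.mem_val.mpr (Finset.mem_univ _)
  have hsplit : (univ : Finset (Fin m)).val = 0 ::ₘ ((univ : Finset (Fin m)).val.erase 0) :=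
    (Multiset.cons_erase h0mem).symm
  have hcardu : Multiset.card (univ : Finset (Fin m)).val = m := by
    rw [← Finset.card_def, Finset.card_univ, Fintype.card_fin]
  have hcard_erase : Multiset.card ((univ : Finset (Fin m)).val.erase 0) = m - 1 := by
    rw [Multiset.card_erase_of_mem h0mem, hcardu]
    exact Nat.pred_eq_sub_one
  have hmem_ne : ∀ i ∈ (univ : Finset (Fin m)).val.erase 0, i ≠ (0 : Fin m) := fun i hi =>
    ((univ : Finset (Fin m)).nodup.mem_erase_iff.mp hi).1
  rw [my_map_univ_prod d, hsplit, Multiset.cons_bind]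
  congr 1
  · rw [my_map_univ_prod (fun x : Fin m × Fin n => d (0, x)), hsplit, Multiset.cons_bind]
    congr 1
    · rw [Multiset.map_map]
      refine Multiset.map_congr rfl fun k _ => ?_
      simp only [hddef, hedef, Function.comp_apply, eq_self_iff_true, if_true]
      push_cast
      ring
    · have hrep : ∀ j ∈ (univ : Finset (Fin m)).val.erase 0,
          ((univ : Finset (Fin n)).val.map fun k => d (0, j, k))
            = Multiset.replicate n (2 * (m:ℂ) - 1) := by
        intro j hj
        have hj0 := hmem_ne j hj
        have hval : ∀ k : Fin n, d (0, j, k) = 2 * (m:ℂ) - 1 := fun k => by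
          simp only [hddef, hedef, eq_self_iff_true, if_true, if_neg hj0]
          ring
        rw [Multiset.map_congr rfl fun k _ => hval k, Multiset.map_const']
        congr 1
        rw [← Finset.card_def, Finset.card_univ, Fintype.card_fin]
      rw [Multiset.bind_congr hrep, my_bind_replicate, hcard_erase, Nat.sub_mul, one_mul]
  · have hrep : ∀ i ∈ (univ : Finset (Fin m)).val.erase 0,
        ((univ : Finset (Fin m × Fin n)).val.map fun x => d (i, x))
          = Multiset.replicate (m * n) (-1 : ℂ) := by
      intro i hi
      have hi0 := hmem_ne i hi
      have hval : ∀ x : Fin m × Fin n, d (i, x) = -1 := fun x => by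
        simp only [hddef, hedef, if_neg hi0]
        ring
      rw [Multiset.map_congr rfl fun x _ => hval x, Multiset.map_const']
      congr 1
      rw [← Finset.card_def, Finset.card_univ, Fintype.card_prod, Fintype.card_fin,
        Fintype.card_fin]
    rw [Multiset.bind_congr hrep, my_bind_replicate, hcard_erase]
    have hmm : m * (m * n) = m ^ 2 * n := by ring
    rw [Nat.sub_mul, one_mul, hmm]
end
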